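/- arXiv:2307.07040 — 3 statements merged into one kernel-verified Lean document; each statement's English description precedes it below -/
import Mathlib

section
/- Let θ : ℝ^d → ℝ^n be continuous and satisfy the Anosov condition: the Lebesgue measure of ⋃_{k ∈ ℤ^n\{0}} {I ∈ ℝ^d : k·θ(I) = 0} equals zero. Let P : ℝ^d × 𝕋^n → ℝ^d be continuous and set ⟨P⟩(I) = ∫_{𝕋^n} P(I,φ) dφ. For N > 0, δ > 0 and R > 0 define A^δ_{N,R} = { I ∈ ℝ^d : ‖I‖ < R and max_{φ∈𝕋^n} | (1/N) ∫₀^N P(I, φ + tθ(I)) dt − ⟨P⟩(I) | > δ }. Then for every fixed δ > 0 and R > 0 the Lebesgue measure of A^δ_{N,R} tends to 0 as N → ∞. -/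
open MeasureTheory Real Filter

noncomputable section

instance : Fact (0 < 2 * π) := ⟨by positivity⟩

/-- The `n`-dimensional torus `ℝⁿ/(2πℤⁿ)`. -/
abbrev Torus (n : ℕ) := Fin n → AddCircle (2 * π)

/-- The normalized Haar probability measure on the torus. -/
noncomputable def haarT (n : ℕ) : Measure (Torus n) :=
  (ENNReal.ofReal ((2 * π) ^ n))⁻¹ • volume

namespace ErgAux

variable {n : ℕ}

lemma torus_volume_univ (n : ℕ) :
    (volume : Measure (Torus n)) Set.univ = ENNReal.ofReal ((2 * π) ^ n) := by
  rw [volume_pi, Measure.pi_univ]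
  simp [AddCircle.measure_univ, ← ENNReal.ofReal_pow (by positivity : (0:ℝ) ≤ 2 * π)]
  rw [ENNReal.ofReal_pow (by positivity), ENNReal.ofReal_mul (by norm_num), ENNReal.ofReal_ofNat]

instance : IsProbabilityMeasure (haarT n) := by
  constructor
  rw [haarT, Measure.smul_apply, torus_volume_univ, smul_eq_mul,
    ENNReal.inv_mul_cancel (by positivity) ENNReal.ofReal_ne_top]

/-- The character of the torus associated to a frequency vector `k : ℤⁿ`. -/
def torusChar (k : Fin n → ℤ) : C(Torus n, ℂ) :=
  ⟨fun φ => ∏ i, fourier (k i) (φ i),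
    continuous_finset_prod _ fun i _ => (fourier (k i)).continuous.comp (continuous_apply i)⟩

lemma torusChar_apply (k : Fin n → ℤ) (φ : Torus n) :
    torusChar k φ = ∏ i, fourier (k i) (φ i) := rfl

lemma norm_torusChar (k : Fin n → ℤ) (φ : Torus n) : ‖torusChar k φ‖ = 1 := by
  rw [torusChar_apply, norm_prod]
  simp [Circle.norm_coe]

lemma integral_fourier_volume {m : ℤ} (hm : m ≠ 0) :
    ∫ x : AddCircle (2 * π), fourier m x = 0 := by
  have h2π : (0:ℝ) < 2 * π := by positivity
  rw [← AddCircle.intervalIntegral_preimage (2 * π) 0 (fun x => fourier m x), zero_add]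
  have hcongr : ∀ x ∈ Set.uIcc (0:ℝ) (2 * π),
      (fourier m (x : AddCircle (2 * π)) : ℂ) = Complex.exp ((m * Complex.I) * x) := by
    intro x _
    rw [fourier_coe_apply]
    congr 1
    have : ((2 * π : ℝ) : ℂ) ≠ 0 := by
      simp only [ne_eq, Complex.ofReal_eq_zero]; positivity
    rw [div_eq_iff this]
    push_cast
    ring
  rw [intervalIntegral.integral_congr hcongr,
    integral_exp_mul_complex (by simp [Complex.I_ne_zero, hm])]
  have : Complex.exp ((m * Complex.I) * (2 * π)) = 1 := by
    have := Complex.exp_int_mul_two_pi_mul_I m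
    rw [← this]
    congr 1
    ring
  simp [this]


lemma fourier_add_arg {T : ℝ} {m : ℤ} {x y : AddCircle T} :
    fourier m (x + y) = fourier m x * fourier m y := by
  rw [fourier_apply, fourier_apply, fourier_apply, smul_add, AddCircle.toCircle_add]
  simp

lemma torusChar_zero : torusChar (0 : Fin n → ℤ) = 1 := by
  ext φ
  simp [torusChar_apply, fourier_zero]

lemma torusChar_mul (k l : Fin n → ℤ) :
    torusChar (k + l) = torusChar k * torusChar l := by
  ext φ
  simp only [torusChar_apply, ContinuousMap.mul_apply, Pi.add_apply, fourier_add,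
    Finset.prod_mul_distrib]

lemma torusChar_star (k : Fin n → ℤ) : star (torusChar k) = torusChar (-k) := by
  ext φ
  rw [ContinuousMap.star_apply, torusChar_apply, torusChar_apply, star_prod]
  refine Finset.prod_congr rfl fun i _ => ?_
  rw [Pi.neg_apply, fourier_neg, starRingEnd_apply]

lemma integral_torusChar {k : Fin n → ℤ} (hk : k ≠ 0) :
    ∫ φ, torusChar k φ ∂(haarT n) = 0 := by
  have : ∫ φ : Torus n, torusChar k φ ∂volume = 0 := by
    have := MeasureTheory.integral_fintype_prod_eq_prod (𝕜 := ℂ) (ι := Fin n) (μ := fun _ => volume)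
      (fun i (x : AddCircle (2 * π)) => fourier (k i) x)
    simp only [torusChar_apply]
    rw [volume_pi, this]
    obtain ⟨i0, hi0⟩ : ∃ i, k i ≠ 0 := Function.ne_iff.mp hk
    exact Finset.prod_eq_zero (Finset.mem_univ i0) (integral_fourier_volume hi0)
  rw [haarT, integral_smul_measure, this, smul_zero]

/-- The star subalgebra generated by the torus characters. -/
def torusSubalgebra : StarSubalgebra ℂ C(Torus n, ℂ) where
  toSubalgebra := Algebra.adjoin ℂ (Set.range torusChar)
  star_mem' := by
    show Algebra.adjoin ℂ (Set.range (torusChar (n := n))) ≤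
      star (Algebra.adjoin ℂ (Set.range (torusChar (n := n))))
    refine Algebra.adjoin_le ?_
    rintro - ⟨k, rfl⟩
    exact Algebra.subset_adjoin ⟨-k, (torusChar_star k).symm⟩

lemma torusSubalgebra_coe :
    Subalgebra.toSubmodule (torusSubalgebra (n := n)).toSubalgebra
      = Submodule.span ℂ (Set.range torusChar) := by
  apply Algebra.adjoin_eq_span_of_subset
  refine Set.Subset.trans ?_ Submodule.subset_span
  intro x hx
  refine Submonoid.closure_induction (fun _ => id) ⟨0, torusChar_zero⟩ ?_ hx
  rintro - - - - ⟨k, rfl⟩ ⟨l, rfl⟩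
  exact ⟨k + l, torusChar_mul k l⟩

lemma torusSubalgebra_separatesPoints :
    (torusSubalgebra (n := n)).SeparatesPoints := by
  intro φ ψ hφψ
  obtain ⟨i, hi⟩ : ∃ i, φ i ≠ ψ i := Function.ne_iff.mp hφψ
  refine ⟨_, ⟨torusChar (Pi.single i 1), Algebra.subset_adjoin ⟨_, rfl⟩, rfl⟩, ?_⟩
  have key : ∀ χ : Torus n, torusChar (Pi.single i 1) χ = AddCircle.toCircle (χ i) := by
    intro χ
    rw [torusChar_apply, Finset.prod_eq_single i]
    · rw [Pi.single_eq_same, fourier_one]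
    · intro j _ hj
      rw [Pi.single_eq_of_ne hj, fourier_zero]
    · simp
  dsimp only
  rw [key, key]
  have h2π : (2 * π : ℝ) ≠ 0 := by positivity
  exact fun h => hi (AddCircle.injective_toCircle h2π (Subtype.coe_inj.mp h))

lemma span_torusChar_closure_eq_top :
    (Submodule.span ℂ (Set.range (torusChar (n := n)))).topologicalClosure = ⊤ := by
  rw [← torusSubalgebra_coe]
  have := ContinuousMap.starSubalgebra_topologicalClosure_eq_top_of_separatesPoints
    (torusSubalgebra (n := n)) torusSubalgebra_separatesPoints
  exact congr_arg (Subalgebra.toSubmodule <| StarSubalgebra.toSubalgebra ·) this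


/-- Translation flow on the torus with frequency `ω`. -/
def torusTr (ω : Fin n → ℝ) (t : ℝ) (φ : Torus n) : Torus n :=
  fun i => φ i + ((t * ω i : ℝ) : AddCircle (2 * π))

lemma continuous_coe_addCircle : Continuous ((↑) : ℝ → AddCircle (2 * π)) :=
  AddCircle.continuous_mk' (2 * π)

lemma continuous_torusTr (ω : Fin n → ℝ) (φ : Torus n) :
    Continuous fun t => torusTr ω t φ :=
  continuous_pi fun i => continuous_const.add
    (continuous_coe_addCircle.comp (continuous_id.mul continuous_const))

lemma torusChar_torusTr (k : Fin n → ℤ) (ω : Fin n → ℝ) (t : ℝ) (φ : Torus n) :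
    torusChar k (torusTr ω t φ)
      = torusChar k φ * Complex.exp ((((∑ i, (k i : ℝ) * ω i) : ℝ) * Complex.I) * t) := by
  simp only [torusChar_apply, torusTr, fourier_add_arg, Finset.prod_mul_distrib]
  congr 1
  have : ∀ i : Fin n, fourier (k i) (((t * ω i : ℝ) : AddCircle (2 * π)))
      = Complex.exp ((((k i : ℝ) * ω i : ℝ) * Complex.I) * t) := by
    intro i
    rw [fourier_coe_apply]
    congr 1
    have h2π : ((2 * π : ℝ) : ℂ) ≠ 0 := by
      simp only [ne_eq, Complex.ofReal_eq_zero]; positivity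
    rw [div_eq_iff h2π]
    push_cast
    ring
  rw [Finset.prod_congr rfl fun i _ => this i, ← Complex.exp_sum]
  congr 1
  push_cast [Finset.sum_mul]
  exact Finset.sum_congr rfl fun i _ => by ring


/-- The ergodic-average property for a continuous function on the torus. -/
def GoodF (ω : Fin n → ℝ) (f : C(Torus n, ℂ)) : Prop :=
  ∀ ε : ℝ, 0 < ε → ∀ᶠ N : ℝ in atTop, ∀ φ : Torus n,
    ‖(1 / N : ℝ) • (∫ t in (0:ℝ)..N, f (torusTr ω t φ)) - ∫ ψ, f ψ ∂(haarT n)‖ ≤ ε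

lemma intervalIntegrable_comp_tr (f : C(Torus n, ℂ)) (ω : Fin n → ℝ) (φ : Torus n) (a b : ℝ) :
    IntervalIntegrable (fun t => f (torusTr ω t φ)) volume a b :=
  (f.continuous.comp (continuous_torusTr ω φ)).intervalIntegrable a b

lemma integrable_haarT {E : Type*} [NormedAddCommGroup E] (f : Torus n → E) (hf : Continuous f) :
    Integrable f (haarT n) :=
  hf.integrable_of_hasCompactSupport (HasCompactSupport.of_compactSpace f)

lemma goodF_zero (ω : Fin n → ℝ) : GoodF ω (0 : C(Torus n, ℂ)) := by
  intro ε hε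
  filter_upwards with N φ
  simp [le_of_lt hε]

lemma goodF_add {ω : Fin n → ℝ} {f g : C(Torus n, ℂ)} (hf : GoodF ω f) (hg : GoodF ω g) :
    GoodF ω (f + g) := by
  intro ε hε
  filter_upwards [hf (ε/2) (by positivity), hg (ε/2) (by positivity)] with N hNf hNg φ
  have key : (1 / N : ℝ) • (∫ t in (0:ℝ)..N, (f + g) (torusTr ω t φ))
        - ∫ ψ, (f + g) ψ ∂(haarT n)
      = ((1 / N : ℝ) • (∫ t in (0:ℝ)..N, f (torusTr ω t φ)) - ∫ ψ, f ψ ∂(haarT n))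
        + ((1 / N : ℝ) • (∫ t in (0:ℝ)..N, g (torusTr ω t φ)) - ∫ ψ, g ψ ∂(haarT n)) := by
    simp only [ContinuousMap.add_apply]
    rw [intervalIntegral.integral_add (intervalIntegrable_comp_tr f ω φ 0 N)
        (intervalIntegrable_comp_tr g ω φ 0 N),
      integral_add (integrable_haarT f f.continuous) (integrable_haarT g g.continuous),
      smul_add]
    abel
  rw [key]
  calc ‖_ + _‖ ≤ _ + _ := norm_add_le _ _
    _ ≤ ε/2 + ε/2 := add_le_add (hNf φ) (hNg φ)
    _ = ε := by ring

lemma goodF_smul {ω : Fin n → ℝ} (c : ℂ) {f : C(Torus n, ℂ)} (hf : GoodF ω f) :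
    GoodF ω (c • f) := by
  rcases eq_or_ne c 0 with rfl | hc
  · rw [zero_smul]; exact goodF_zero ω
  intro ε hε
  have hc' : (0:ℝ) < ‖c‖ := norm_pos_iff.mpr hc
  filter_upwards [hf (ε/‖c‖) (by positivity)] with N hN φ
  have key : (1 / N : ℝ) • (∫ t in (0:ℝ)..N, (c • f) (torusTr ω t φ))
        - ∫ ψ, (c • f) ψ ∂(haarT n)
      = c • ((1 / N : ℝ) • (∫ t in (0:ℝ)..N, f (torusTr ω t φ)) - ∫ ψ, f ψ ∂(haarT n)) := by
    simp only [ContinuousMap.smul_apply]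
    rw [intervalIntegral.integral_smul, integral_smul, smul_sub, smul_comm]
  rw [key, norm_smul]
  calc ‖c‖ * ‖_‖ ≤ ‖c‖ * (ε/‖c‖) := by
        exact mul_le_mul_of_nonneg_left (hN φ) (norm_nonneg c)
    _ = ε := by
        rw [mul_comm, div_mul_cancel₀ _ (ne_of_gt hc')]

lemma goodF_torusChar {ω : Fin n → ℝ}
    (hω : ∀ k : Fin n → ℤ, k ≠ 0 → (∑ i, (k i : ℝ) * ω i) ≠ 0)
    (k : Fin n → ℤ) : GoodF ω (torusChar k) := by
  intro ε hε
  rcases eq_or_ne k 0 with rfl | hk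
  · filter_upwards [eventually_gt_atTop (0:ℝ)] with N hN φ
    rw [torusChar_zero]
    simp only [ContinuousMap.one_apply]
    rw [intervalIntegral.integral_const, integral_const]
    simp only [measure_univ, ENNReal.toReal_one, one_smul, sub_zero, smul_smul, one_div]
    rw [inv_mul_cancel₀ (ne_of_gt hN)]
    simp [le_of_lt hε]
  · set a : ℝ := ∑ i, (k i : ℝ) * ω i with ha_def
    have ha : a ≠ 0 := hω k hk
    have haa : (0:ℝ) < |a| := abs_pos.mpr ha
    set B : ℝ := 2 / |a| with hB_def
    have hB : 0 ≤ B := by positivity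
    filter_upwards [eventually_ge_atTop (max 1 (B/ε))] with N hN φ
    have hN1 : (1:ℝ) ≤ N := le_trans (le_max_left _ _) hN
    have hN0 : (0:ℝ) < N := lt_of_lt_of_le one_pos hN1
    have hc : ((a : ℂ) * Complex.I) ≠ 0 := by
      simp [Complex.ofReal_eq_zero, ha, Complex.I_ne_zero]
    have hint : (∫ t in (0:ℝ)..N, torusChar k (torusTr ω t φ))
        = torusChar k φ * ((Complex.exp ((a : ℂ) * Complex.I * N) - 1) / ((a:ℂ) * Complex.I)) := by
      simp only [torusChar_torusTr]
      rw [intervalIntegral.integral_const_mul, integral_exp_mul_complex hc]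
      congr 1
      rw [Complex.ofReal_zero, mul_zero, Complex.exp_zero]
    rw [integral_torusChar hk, sub_zero, hint, norm_smul]
    have hnorm2 : ‖Complex.exp ((a:ℂ) * Complex.I * N) - 1‖ ≤ 2 := by
      calc ‖Complex.exp ((a:ℂ) * Complex.I * N) - 1‖
          ≤ ‖Complex.exp ((a:ℂ) * Complex.I * N)‖ + ‖(1:ℂ)‖ := norm_sub_le _ _
        _ = 2 := by
            have : ((a:ℂ) * Complex.I * N) = ((a * N : ℝ) : ℂ) * Complex.I := by
              push_cast; ring
            rw [this, Complex.norm_exp_ofReal_mul_I]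
            norm_num
    have hca : ‖((a:ℂ) * Complex.I)‖ = |a| := by
      rw [norm_mul, Complex.norm_I, Complex.norm_real, mul_one]
      rfl
    have hnorm : ‖torusChar k φ * ((Complex.exp ((a : ℂ) * Complex.I * N) - 1)
          / ((a:ℂ) * Complex.I))‖ ≤ B := by
      rw [norm_mul, norm_torusChar, one_mul, norm_div, hca]
      exact div_le_div_of_nonneg_right hnorm2 haa.le
    have hfinal : ‖(1 / N : ℝ)‖ * B ≤ ε := by
      rw [Real.norm_eq_abs, abs_of_pos (by positivity : (0:ℝ) < 1/N)]
      have hBN : B ≤ ε * N := by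
        have h1 : B / ε ≤ N := le_trans (le_max_right _ _) hN
        calc B = ε * (B / ε) := by field_simp
          _ ≤ ε * N := mul_le_mul_of_nonneg_left h1 (le_of_lt hε)
      rw [div_mul_eq_mul_div, one_mul, div_le_iff₀ hN0]
      linarith [hBN]
    calc ‖(1 / N : ℝ)‖ * ‖_‖ ≤ ‖(1 / N : ℝ)‖ * B :=
          mul_le_mul_of_nonneg_left hnorm (norm_nonneg _)
      _ ≤ ε := hfinal


lemma goodF_isClosed (ω : Fin n → ℝ) : IsClosed {f : C(Torus n, ℂ) | GoodF ω f} := by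
  refine isClosed_of_closure_subset fun f hf => ?_
  intro ε hε
  obtain ⟨g, hgS, hgd⟩ := Metric.mem_closure_iff.mp hf (ε/3) (by positivity)
  filter_upwards [hgS (ε/3) (by positivity), eventually_gt_atTop (0:ℝ)] with N hNg hN0 φ
  have hfg : ∀ x : Torus n, ‖f x - g x‖ ≤ ε/3 := fun x => le_of_lt
    (lt_of_le_of_lt (by rw [← dist_eq_norm]; exact ContinuousMap.dist_apply_le_dist x) hgd)
  have h1 : ‖(1 / N : ℝ) • (∫ t in (0:ℝ)..N, f (torusTr ω t φ))
      - (1 / N : ℝ) • (∫ t in (0:ℝ)..N, g (torusTr ω t φ))‖ ≤ ε/3 := by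
    rw [← smul_sub, ← intervalIntegral.integral_sub (intervalIntegrable_comp_tr f ω φ 0 N)
      (intervalIntegrable_comp_tr g ω φ 0 N), norm_smul]
    have hb : ‖∫ t in (0:ℝ)..N, (f (torusTr ω t φ) - g (torusTr ω t φ))‖ ≤ (ε/3) * |N - 0| :=
      intervalIntegral.norm_integral_le_of_norm_le_const fun t _ => hfg _
    calc ‖(1 / N : ℝ)‖ * ‖∫ t in (0:ℝ)..N, (f (torusTr ω t φ) - g (torusTr ω t φ))‖
        ≤ ‖(1 / N : ℝ)‖ * ((ε/3) * |N - 0|) :=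
          mul_le_mul_of_nonneg_left hb (norm_nonneg _)
      _ = ε/3 := by
          rw [Real.norm_eq_abs, sub_zero, abs_of_pos (by positivity : (0:ℝ) < 1/N),
            abs_of_pos hN0]
          field_simp
  have h2 : ‖(∫ ψ, g ψ ∂(haarT n)) - ∫ ψ, f ψ ∂(haarT n)‖ ≤ ε/3 := by
    rw [← integral_sub (integrable_haarT g g.continuous) (integrable_haarT f f.continuous)]
    calc ‖∫ ψ, (g ψ - f ψ) ∂(haarT n)‖ ≤ (ε/3) * (haarT n Set.univ).toReal :=
        norm_integral_le_of_norm_le_const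
          (Eventually.of_forall fun x => by rw [norm_sub_rev]; exact hfg x)
      _ = ε/3 := by simp
  have key : (1 / N : ℝ) • (∫ t in (0:ℝ)..N, f (torusTr ω t φ)) - ∫ ψ, f ψ ∂(haarT n)
      = ((1 / N : ℝ) • (∫ t in (0:ℝ)..N, f (torusTr ω t φ))
          - (1 / N : ℝ) • (∫ t in (0:ℝ)..N, g (torusTr ω t φ)))
        + (((1 / N : ℝ) • (∫ t in (0:ℝ)..N, g (torusTr ω t φ)) - ∫ ψ, g ψ ∂(haarT n))
        + ((∫ ψ, g ψ ∂(haarT n)) - ∫ ψ, f ψ ∂(haarT n))) := by abel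
  rw [key]
  calc ‖_ + _‖ ≤ _ + ‖_ + _‖ := norm_add_le _ _
    _ ≤ ε/3 + (ε/3 + ε/3) := add_le_add h1 (le_trans (norm_add_le _ _) (add_le_add (hNg φ) h2))
    _ = ε := by ring

lemma goodF_all {ω : Fin n → ℝ}
    (hω : ∀ k : Fin n → ℤ, k ≠ 0 → (∑ i, (k i : ℝ) * ω i) ≠ 0)
    (f : C(Torus n, ℂ)) : GoodF ω f := by
  have hspan : (Submodule.span ℂ (Set.range (torusChar (n := n))) : Set C(Torus n, ℂ))
      ⊆ {g | GoodF ω g} := by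
    intro g hg
    refine Submodule.span_induction ?_ ?_ ?_ ?_ hg
    · rintro x ⟨k, rfl⟩
      exact goodF_torusChar hω k
    · exact goodF_zero ω
    · intro x y _ _ hx hy
      exact goodF_add hx hy
    · intro c x _ hx
      exact goodF_smul c hx
  have h1 : f ∈ (Submodule.span ℂ (Set.range (torusChar (n := n)))).topologicalClosure := by
    rw [span_torusChar_closure_eq_top]
    trivial
  rw [Submodule.topologicalClosure] at h1
  have h2 : f ∈ closure (Submodule.span ℂ (Set.range (torusChar (n := n)))
      : Set C(Torus n, ℂ)) := h1
  exact (goodF_isClosed ω).closure_subset_iff.mpr hspan h2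


lemma good_vector {d : ℕ} {ω : Fin n → ℝ}
    (hω : ∀ k : Fin n → ℤ, k ≠ 0 → (∑ i, (k i : ℝ) * ω i) ≠ 0)
    (g : Torus n → EuclideanSpace ℝ (Fin d)) (hg : Continuous g)
    {δ : ℝ} (hδ : 0 < δ) :
    ∀ᶠ N : ℝ in atTop, ∀ φ : Torus n,
      ‖(1 / N : ℝ) • (∫ t in (0:ℝ)..N, g (torusTr ω t φ)) - ∫ ψ, g ψ ∂(haarT n)‖ ≤ δ := by
  set ε : ℝ := δ / (Real.sqrt d + 1) with hε_def
  have hsd : (0:ℝ) ≤ Real.sqrt d := Real.sqrt_nonneg _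
  have hε : 0 < ε := by positivity
  set L : Fin d → (EuclideanSpace ℝ (Fin d) →L[ℝ] ℂ) :=
    fun j => Complex.ofRealCLM.comp (EuclideanSpace.proj j) with hL_def
  have hGood : ∀ j : Fin d, GoodF ω ⟨fun ψ => L j (g ψ), (L j).continuous.comp hg⟩ :=
    fun j => goodF_all hω _
  have hev : ∀ᶠ N : ℝ in atTop, ∀ j : Fin d, ∀ φ : Torus n,
      ‖(1 / N : ℝ) • (∫ t in (0:ℝ)..N, L j (g (torusTr ω t φ)))
        - ∫ ψ, L j (g ψ) ∂(haarT n)‖ ≤ ε :=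
    eventually_all.mpr fun j => hGood j ε hε
  filter_upwards [hev] with N hN φ
  set V := (1 / N : ℝ) • (∫ t in (0:ℝ)..N, g (torusTr ω t φ)) - ∫ ψ, g ψ ∂(haarT n) with hV
  have hcoord : ∀ j : Fin d, ‖V j‖ ≤ ε := by
    intro j
    have hIt : IntervalIntegrable (fun t => g (torusTr ω t φ)) volume 0 N :=
      (hg.comp (continuous_torusTr ω φ)).intervalIntegrable 0 N
    have hIh : Integrable g (haarT n) := integrable_haarT g hg
    have hLV : L j V = (1 / N : ℝ) • (∫ t in (0:ℝ)..N, L j (g (torusTr ω t φ)))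
        - ∫ ψ, L j (g ψ) ∂(haarT n) := by
      rw [hV, map_sub, (L j).map_smul, (L j).intervalIntegral_comp_comm hIt,
        (L j).integral_comp_comm hIh]
    have h2 : ‖L j V‖ ≤ ε := by rw [hLV]; exact hN j φ
    have h3 : L j V = ((V j : ℝ) : ℂ) := by
      simp [hL_def]
    rwa [h3, Complex.norm_real] at h2
  have hnormV : ‖V‖ ≤ Real.sqrt d * ε := by
    rw [EuclideanSpace.norm_eq]
    have hsum : ∑ j, ‖V j‖^2 ≤ (d : ℝ) * ε^2 := by
      calc ∑ j, ‖V j‖^2 ≤ ∑ _j : Fin d, ε^2 :=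
          Finset.sum_le_sum fun j _ => by
            have := hcoord j
            nlinarith [norm_nonneg (V j)]
        _ = (d : ℝ) * ε^2 := by simp [Finset.sum_const, mul_comm]
    calc Real.sqrt (∑ j, ‖V j‖^2) ≤ Real.sqrt ((d : ℝ) * ε^2) := Real.sqrt_le_sqrt hsum
      _ = Real.sqrt d * ε := by
          rw [Real.sqrt_mul (by positivity), Real.sqrt_sq hε.le]
  refine le_trans hnormV ?_
  rw [hε_def, mul_div_assoc']
  rw [div_le_iff₀ (by positivity : (0:ℝ) < Real.sqrt d + 1)]
  nlinarith [hδ.le, hsd]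


lemma continuous_avgP {d : ℕ} (P : EuclideanSpace ℝ (Fin d) → Torus n → EuclideanSpace ℝ (Fin d))
    (hP : Continuous fun p : EuclideanSpace ℝ (Fin d) × Torus n => P p.1 p.2) :
    Continuous fun I => ∫ ψ, P I ψ ∂(haarT n) := by
  rw [continuous_iff_continuousAt]
  intro I₀
  have hK : IsCompact (Metric.closedBall I₀ 1 ×ˢ (Set.univ : Set (Torus n))) :=
    (isCompact_closedBall I₀ 1).prod isCompact_univ
  obtain ⟨C, hC⟩ := hK.exists_bound_of_continuousOn hP.continuousOn
  refine continuousAt_of_dominated (bound := fun _ => C) ?_ ?_ ?_ ?_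
  · exact Eventually.of_forall fun I =>
      ((hP.comp (Continuous.prodMk_right I))).aestronglyMeasurable
  · filter_upwards [Metric.closedBall_mem_nhds I₀ one_pos] with I hI
    exact Eventually.of_forall fun ψ => hC (I, ψ) ⟨hI, Set.mem_univ ψ⟩
  · exact integrable_const C
  · exact Eventually.of_forall fun ψ =>
      (hP.comp (continuous_id.prodMk continuous_const)).continuousAt

lemma measurableSet_badSet {d : ℕ} {θ : EuclideanSpace ℝ (Fin d) → Fin n → ℝ}
    (hθ : Continuous θ)
    {P : EuclideanSpace ℝ (Fin d) → Torus n → EuclideanSpace ℝ (Fin d)}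
    (hP : Continuous fun p : EuclideanSpace ℝ (Fin d) × Torus n => P p.1 p.2)
    (δ R N : ℝ) :
    MeasurableSet {I : EuclideanSpace ℝ (Fin d) | ‖I‖ < R ∧ ∃ φ : Torus n,
      δ < ‖(1 / N) • (∫ t in (0:ℝ)..N,
              P I (fun i => φ i + ((t * θ I i : ℝ) : AddCircle (2 * π))))
            - ∫ ψ, P I ψ ∂(haarT n)‖} := by
  have hTr : Continuous (Function.uncurry
      fun (p : EuclideanSpace ℝ (Fin d) × Torus n) (t : ℝ) =>
        P p.1 (fun i => p.2 i + ((t * θ p.1 i : ℝ) : AddCircle (2 * π)))) := by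
    have h1 : Continuous fun q : (EuclideanSpace ℝ (Fin d) × Torus n) × ℝ =>
        ((q.1.1, fun i => q.1.2 i + ((q.2 * θ q.1.1 i : ℝ) : AddCircle (2 * π))) :
          EuclideanSpace ℝ (Fin d) × Torus n) := by
      refine Continuous.prodMk (continuous_fst.comp continuous_fst) ?_
      refine continuous_pi fun i => Continuous.add
        ((continuous_apply i).comp (continuous_snd.comp continuous_fst)) ?_
      exact continuous_coe_addCircle.comp (continuous_snd.mul
        ((continuous_apply i).comp (hθ.comp (continuous_fst.comp continuous_fst))))
    exact hP.comp h1
  have hInt : Continuous fun p : EuclideanSpace ℝ (Fin d) × Torus n =>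
      ∫ t in (0:ℝ)..N, P p.1 (fun i => p.2 i + ((t * θ p.1 i : ℝ) : AddCircle (2 * π))) :=
    intervalIntegral.continuous_parametric_intervalIntegral_of_continuous' hTr 0 N
  have hF : Continuous fun p : EuclideanSpace ℝ (Fin d) × Torus n =>
      ‖(1 / N) • (∫ t in (0:ℝ)..N,
          P p.1 (fun i => p.2 i + ((t * θ p.1 i : ℝ) : AddCircle (2 * π))))
        - ∫ ψ, P p.1 ψ ∂(haarT n)‖ :=
    ((hInt.const_smul (1 / N : ℝ)).sub ((continuous_avgP (n := n) P hP).comp continuous_fst)).norm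
  have hU : IsOpen {I : EuclideanSpace ℝ (Fin d) | ∃ φ : Torus n,
      δ < ‖(1 / N) • (∫ t in (0:ℝ)..N,
              P I (fun i => φ i + ((t * θ I i : ℝ) : AddCircle (2 * π))))
            - ∫ ψ, P I ψ ∂(haarT n)‖} := by
    have himg : {I : EuclideanSpace ℝ (Fin d) | ∃ φ : Torus n,
        δ < ‖(1 / N) • (∫ t in (0:ℝ)..N,
                P I (fun i => φ i + ((t * θ I i : ℝ) : AddCircle (2 * π))))
              - ∫ ψ, P I ψ ∂(haarT n)‖}
        = Prod.fst '' ((fun p : EuclideanSpace ℝ (Fin d) × Torus n =>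
            ‖(1 / N) • (∫ t in (0:ℝ)..N,
                P p.1 (fun i => p.2 i + ((t * θ p.1 i : ℝ) : AddCircle (2 * π))))
              - ∫ ψ, P p.1 ψ ∂(haarT n)‖) ⁻¹' Set.Ioi δ) := by
      ext I
      constructor
      · rintro ⟨φ, hφ⟩
        exact ⟨(I, φ), hφ, rfl⟩
      · rintro ⟨⟨I', φ⟩, hφ, rfl⟩
        exact ⟨φ, hφ⟩
    rw [himg]
    exact isOpenMap_fst _ (isOpen_Ioi.preimage hF)
  have : {I : EuclideanSpace ℝ (Fin d) | ‖I‖ < R ∧ ∃ φ : Torus n,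
      δ < ‖(1 / N) • (∫ t in (0:ℝ)..N,
              P I (fun i => φ i + ((t * θ I i : ℝ) : AddCircle (2 * π))))
            - ∫ ψ, P I ψ ∂(haarT n)‖}
      = {I : EuclideanSpace ℝ (Fin d) | ‖I‖ < R} ∩ {I | ∃ φ : Torus n,
      δ < ‖(1 / N) • (∫ t in (0:ℝ)..N,
              P I (fun i => φ i + ((t * θ I i : ℝ) : AddCircle (2 * π))))
            - ∫ ψ, P I ψ ∂(haarT n)‖} := rfl
  rw [this]
  exact ((isOpen_lt continuous_norm continuous_const).inter hU).measurableSet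

end ErgAux

open ErgAux in
/-- If `θ : ℝ^d → ℝ^n` is continuous and satisfies the Anosov condition, and
`P : ℝ^d × 𝕋ⁿ → ℝ^d` is continuous, then for fixed `δ, R > 0` the Lebesgue measure of the
set `A^δ_{N,R}` of those `I` with `‖I‖ < R` for which the time average of
`t ↦ P(I, φ + tθ(I))` over `[0,N]` differs from the space average `⟨P⟩(I)` by more than `δ`
for some angle `φ`, tends to `0` as `N → ∞`. -/
theorem measure_nonergodic_set_tendsto_zero
    (d n : ℕ) (θ : EuclideanSpace ℝ (Fin d) → Fin n → ℝ) (hθ : Continuous θ)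
    (hAnosov : volume (⋃ k ∈ {k : Fin n → ℤ | k ≠ 0},
        {I : EuclideanSpace ℝ (Fin d) | ∑ i, (k i : ℝ) * θ I i = 0}) = 0)
    (P : EuclideanSpace ℝ (Fin d) → Torus n → EuclideanSpace ℝ (Fin d))
    (hP : Continuous fun p : EuclideanSpace ℝ (Fin d) × Torus n => P p.1 p.2)
    (δ R : ℝ) (hδ : 0 < δ) (hR : 0 < R) :
    Tendsto
      (fun N : ℝ => volume
        {I : EuclideanSpace ℝ (Fin d) | ‖I‖ < R ∧ ∃ φ : Torus n,
          δ < ‖(1 / N) • (∫ t in (0:ℝ)..N,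
                  P I (fun i => φ i + ((t * θ I i : ℝ) : AddCircle (2 * π))))
                - ∫ ψ, P I ψ ∂(haarT n)‖})
      atTop (nhds 0) := by
  
  have h0 : (0 : ENNReal) = volume (∅ : Set (EuclideanSpace ℝ (Fin d))) := by simp
  rw [h0]
  refine MeasureTheory.tendsto_measure_of_ae_tendsto_indicator atTop MeasurableSet.empty
    (fun N => measurableSet_badSet hθ hP δ R N)
    (measurableSet_ball (x := (0 : EuclideanSpace ℝ (Fin d))) (ε := R))
    measure_ball_lt_top.ne ?_ ?_
  · exact Eventually.of_forall fun N I hI => mem_ball_zero_iff.mpr hI.1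
  · have hres : ∀ᵐ I : EuclideanSpace ℝ (Fin d),
        I ∉ ⋃ k ∈ {k : Fin n → ℤ | k ≠ 0},
          {I : EuclideanSpace ℝ (Fin d) | ∑ i, (k i : ℝ) * θ I i = 0} :=
      MeasureTheory.measure_eq_zero_iff_ae_notMem.mp hAnosov
    filter_upwards [hres] with I hI
    have hω : ∀ k : Fin n → ℤ, k ≠ 0 → (∑ i, (k i : ℝ) * θ I i) ≠ 0 := by
      intro k hk
      simp only [Set.mem_iUnion, Set.mem_setOf_eq, not_exists] at hI
      exact hI k hk
    by_cases hIR : ‖I‖ < R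
    · have hgv := good_vector (d := d) hω (P I) (hP.comp (Continuous.prodMk_right I)) hδ
      filter_upwards [hgv] with N hN
      simp only [Set.mem_empty_iff_false, iff_false, Set.mem_setOf_eq, not_and, not_exists,
        not_lt]
      intro _ φ
      exact hN φ
    · filter_upwards with N
      simp only [Set.mem_empty_iff_false, iff_false, Set.mem_setOf_eq, not_and]
      intro h
      exact absurd h hIR
end
end

section
/- Let λ > 0 and let B : ℝ^{2n} → ℝ^{2n×2n₁} be continuous with λ‖ξ‖² ≤ ξᵀB(v)B(v)ᵀξ ≤ λ⁻¹‖ξ‖² for all v, ξ. Write B = (B_{kj}) in 2×2 blocks (1 ≤ k ≤ n, 1 ≤ j ≤ n₁), let X(v) = ∫_{𝕋^n} Φ_{−θ} B(Φ_θ v) B(Φ_θ v)ᵀ Φ_θ dθ, and let ⟨⟨B⟩⟩(v) = (⟨⟨B⟩⟩_{kj}(v))_{1≤k,j≤n} (2×2 blocks) be its unique symmetric positive-semidefinite square root. Then for all 1 ≤ k, m ≤ n and all v ∈ ℝ^{2n}: Σ_{j=1}^n v_kᵀ ⟨⟨B⟩⟩_{kj}(v) (⟨⟨B⟩⟩_{mj}(v))ᵀ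 v_m = ∫_{𝕋^n} Σ_{j=1}^{n₁} (Φᵏ_θ v_k)ᵀ B_{kj}(Φ_θ v) (B_{mj}(Φ_θ v))ᵀ (Φᵐ_θ v_m) dθ; moreover this quantity is invariant under v ↦ Φ_σ v for every σ ∈ 𝕋^n, hence depends on v only through the action vector I(v). -/
open MeasureTheory Real Matrix

noncomputable section

/-- Cosine, as a function on `ℝ/(2πℤ)`. -/
noncomputable def tcos : AddCircle (2 * π) → ℝ := Real.cos_periodic.lift

/-- Sine, as a function on `ℝ/(2πℤ)`. -/
noncomputable def tsin : AddCircle (2 * π) → ℝ := Real.sin_periodic.lift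

/-- `ℝ^{2n} = (ℝ²)ⁿ`, with Euclidean norm; the `k`-th ℝ²-component of `v` is
`(v (k,0), v (k,1))`. -/
abbrev E2n (n : ℕ) := EuclideanSpace ℝ (Fin n × Fin 2)

/-- The block-diagonal rotation `Φ_θ` acting on `ℝ^{2n}`: the `k`-th ℝ²-block is rotated
by the angle `θ k`. -/
noncomputable def rotVec {n : ℕ} (θ : Torus n) (v : E2n n) : E2n n :=
  (EuclideanSpace.equiv (Fin n × Fin 2) ℝ).symm fun p =>
    if p.2 = 0 then tcos (θ p.1) * v (p.1, 0) - tsin (θ p.1) * v (p.1, 1)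
    else tsin (θ p.1) * v (p.1, 0) + tcos (θ p.1) * v (p.1, 1)

/-- The block-diagonal rotation `Φ_θ` as a `2n × 2n` matrix. -/
noncomputable def rotMat {n : ℕ} (θ : Torus n) : Matrix (Fin n × Fin 2) (Fin n × Fin 2) ℝ :=
  Matrix.of fun p q =>
    if p.1 = q.1 then
      if p.2 = 0 then (if q.2 = 0 then tcos (θ p.1) else -tsin (θ p.1))
      else (if q.2 = 0 then tsin (θ p.1) else tcos (θ p.1))
    else 0

/-- The averaged drift `R(v) = ∫_{𝕋ⁿ} Φ_{−θ} P(Φ_θ v) dθ`. -/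
noncomputable def Rvec {n : ℕ} (P : E2n n → E2n n) (v : E2n n) : E2n n :=
  ∫ θ : Torus n, rotVec (-θ) (P (rotVec θ v)) ∂(haarT n)

/-- The averaged diffusion matrix
`X(v) = ∫_{𝕋ⁿ} Φ_{−θ} B(Φ_θ v) B(Φ_θ v)ᵀ Φ_θ dθ` (defined entrywise). -/
noncomputable def Xmat {n n₁ : ℕ}
    (B : E2n n → Matrix (Fin n × Fin 2) (Fin n₁ × Fin 2) ℝ) (v : E2n n) :
    Matrix (Fin n × Fin 2) (Fin n × Fin 2) ℝ :=
  Matrix.of fun p q =>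
    ∫ θ : Torus n,
      (rotMat (-θ) * (B (rotVec θ v) * (B (rotVec θ v))ᵀ) * rotMat θ) p q ∂(haarT n)

/-- The quadratic pairing `Σ_{j=1}^n v_kᵀ S_{kj} (S_{mj})ᵀ v_m`, where `S_{kj}` denotes the
`2×2` block of `S` at position `(k,j)`, written out in coordinates. -/
noncomputable def quadBlock {n : ℕ} (S : Matrix (Fin n × Fin 2) (Fin n × Fin 2) ℝ)
    (v : E2n n) (k m : Fin n) : ℝ :=
  ∑ j : Fin n, ∑ a : Fin 2, ∑ b : Fin 2, ∑ c : Fin 2,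
    v (k, a) * S (k, a) (j, b) * S (m, c) (j, b) * v (m, c)

/-! ### Auxiliary lemmas -/

section Aux

lemma continuous_tcos : Continuous tcos := continuous_coinduced_dom.mpr Real.continuous_cos
lemma continuous_tsin : Continuous tsin := continuous_coinduced_dom.mpr Real.continuous_sin

lemma tcos_coe (r : ℝ) : tcos (r : AddCircle (2*π)) = Real.cos r := rfl
lemma tsin_coe (r : ℝ) : tsin (r : AddCircle (2*π)) = Real.sin r := rfl

lemma tcos_neg (x : AddCircle (2*π)) : tcos (-x) = tcos x := by
  induction x using QuotientAddGroup.induction_on with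
  | H r => rw [← QuotientAddGroup.mk_neg, tcos_coe, tcos_coe, Real.cos_neg]

lemma tsin_neg (x : AddCircle (2*π)) : tsin (-x) = - tsin x := by
  induction x using QuotientAddGroup.induction_on with
  | H r => rw [← QuotientAddGroup.mk_neg, tsin_coe, tsin_coe, Real.sin_neg]

lemma tcos_add (x y : AddCircle (2*π)) : tcos (x+y) = tcos x * tcos y - tsin x * tsin y := by
  induction x using QuotientAddGroup.induction_on with
  | H r =>
    induction y using QuotientAddGroup.induction_on with
    | H s => rw [← QuotientAddGroup.mk_add, tcos_coe, tcos_coe, tcos_coe, tsin_coe, tsin_coe,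
        Real.cos_add]

lemma tsin_add (x y : AddCircle (2*π)) : tsin (x+y) = tsin x * tcos y + tcos x * tsin y := by
  induction x using QuotientAddGroup.induction_on with
  | H r =>
    induction y using QuotientAddGroup.induction_on with
    | H s => rw [← QuotientAddGroup.mk_add, tsin_coe, tsin_coe, tsin_coe, tcos_coe, tcos_coe,
        Real.sin_add]

instance haarT_invariant (n : ℕ) : (haarT n).IsAddRightInvariant := by
  unfold haarT; infer_instance

lemma integrable_of_continuous {n : ℕ} {f : Torus n → ℝ} (hf : Continuous f) :
    Integrable f (haarT n) := by
  have h1 : Integrable f (volume : Measure (Torus n)) :=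
    hf.integrable_of_hasCompactSupport (HasCompactSupport.of_compactSpace f)
  unfold haarT
  refine h1.smul_measure ?_
  rw [Ne, ENNReal.inv_eq_top, ENNReal.ofReal_eq_zero, not_le]
  positivity

/-- restriction of `v` to the `k`-th block, extended by zero -/
def blk {n : ℕ} (k : Fin n) (v : (Fin n × Fin 2) → ℝ) : (Fin n × Fin 2) → ℝ :=
  fun p => if p.1 = k then v p else 0

lemma rotVec_apply0 {n : ℕ} (θ : Torus n) (v : E2n n) (k : Fin n) :
    rotVec θ v (k, 0) = tcos (θ k) * v (k, 0) - tsin (θ k) * v (k, 1) := rfl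
lemma rotVec_apply1 {n : ℕ} (θ : Torus n) (v : E2n n) (k : Fin n) :
    rotVec θ v (k, 1) = tsin (θ k) * v (k, 0) + tcos (θ k) * v (k, 1) := rfl

lemma fin2_cases (a : Fin 2) : a = 0 ∨ a = 1 := by omega

lemma rotVec_rotVec {n : ℕ} (θ σ : Torus n) (v : E2n n) :
    rotVec θ (rotVec σ v) = rotVec (θ + σ) v := by
  ext p
  obtain ⟨k, a⟩ := p
  have hθσ : (θ + σ) k = θ k + σ k := rfl
  rcases fin2_cases a with h | h <;> subst h <;>
    simp only [rotVec_apply0, rotVec_apply1, hθσ, tcos_add, tsin_add] <;> ring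

lemma rotMat_mulVec_blk {n : ℕ} (θ : Torus n) (v : E2n n) (k : Fin n) :
    (rotMat θ) *ᵥ (blk k v) = blk k (rotVec θ v) := by
  funext p
  obtain ⟨j, a⟩ := p
  have : ((rotMat θ) *ᵥ (blk k v)) (j, a)
      = ∑ i : Fin n, ∑ b : Fin 2, rotMat θ (j,a) (i,b) * blk k v (i,b) := by
    simp [Matrix.mulVec, dotProduct, Fintype.sum_prod_type]
  rw [this, Finset.sum_eq_single j]
  · by_cases hj : j = k
    · subst hj
      rcases fin2_cases a with h | h <;> subst h <;>
        simp [rotMat, blk, Fin.sum_univ_two, rotVec_apply0, rotVec_apply1] <;> ring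
    · simp [blk, hj, rotMat]
  · intro i _ hi
    simp [rotMat, Ne.symm hi]
  · simp

lemma rotMat_neg {n : ℕ} (θ : Torus n) : rotMat (-θ) = (rotMat θ)ᵀ := by
  ext ⟨k,a⟩ ⟨j,b⟩
  by_cases h : k = j
  · subst h
    rcases fin2_cases a with h | h <;> rcases fin2_cases b with h' | h' <;> subst h <;> subst h' <;>
      simp [rotMat, tcos_neg, tsin_neg]
  · simp [rotMat, h, Ne.symm h]

lemma dot_blk {n : ℕ} (N : Matrix (Fin n × Fin 2) (Fin n × Fin 2) ℝ)
    (w : (Fin n × Fin 2) → ℝ) (k m : Fin n) :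
    blk k w ⬝ᵥ (N *ᵥ blk m w)
      = ∑ a : Fin 2, ∑ c : Fin 2, w (k,a) * N (k,a) (m,c) * w (m,c) := by
  have e1 : blk k w ⬝ᵥ (N *ᵥ blk m w)
      = ∑ k' : Fin n, ∑ a : Fin 2, blk k w (k',a) *
          ∑ m' : Fin n, ∑ c : Fin 2, N (k',a) (m',c) * blk m w (m',c) := by
    simp [dotProduct, Matrix.mulVec, Fintype.sum_prod_type]
  rw [e1, Finset.sum_eq_single k]
  · refine Finset.sum_congr rfl fun a _ => ?_
    rw [Finset.sum_eq_single m]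
    · simp only [blk, if_pos rfl, Finset.mul_sum]
      exact Finset.sum_congr rfl fun c _ => by simp only [if_true]; ring
    · intro b _ hb; simp [blk, hb]
    · simp
  · intro b _ hb; simp [blk, hb]
  · simp

lemma pair_eq {n n₁ : ℕ} (M : Matrix (Fin n × Fin 2) (Fin n₁ × Fin 2) ℝ)
    (w : (Fin n × Fin 2) → ℝ) (k m : Fin n) :
    (∑ j : Fin n₁, ∑ a : Fin 2, ∑ b : Fin 2, ∑ c : Fin 2,
      w (k, a) * M (k, a) (j, b) * M (m, c) (j, b) * w (m, c))
    = blk k w ⬝ᵥ ((M * Mᵀ) *ᵥ blk m w) := by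
  rw [dot_blk]
  rw [Finset.sum_comm]
  refine Finset.sum_congr rfl fun a _ => ?_
  have : (∑ j : Fin n₁, ∑ b : Fin 2, ∑ c : Fin 2,
        w (k, a) * M (k, a) (j, b) * M (m, c) (j, b) * w (m, c))
      = ∑ c : Fin 2, ∑ j : Fin n₁, ∑ b : Fin 2,
        w (k, a) * M (k, a) (j, b) * M (m, c) (j, b) * w (m, c) := by
    calc (∑ j : Fin n₁, ∑ b : Fin 2, ∑ c : Fin 2,
        w (k, a) * M (k, a) (j, b) * M (m, c) (j, b) * w (m, c))
        = ∑ j : Fin n₁, ∑ c : Fin 2, ∑ b : Fin 2,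
            w (k, a) * M (k, a) (j, b) * M (m, c) (j, b) * w (m, c) :=
          Finset.sum_congr rfl fun j _ => Finset.sum_comm
      _ = _ := Finset.sum_comm
  rw [this]
  refine Finset.sum_congr rfl fun c _ => ?_
  simp only [Matrix.mul_apply, Matrix.transpose_apply, Fintype.sum_prod_type,
    Finset.mul_sum, Finset.sum_mul]
  exact Finset.sum_congr rfl fun j _ => Finset.sum_congr rfl fun b _ => by ring

lemma conj_pair {n : ℕ} (θ : Torus n) (M : Matrix (Fin n × Fin 2) (Fin n × Fin 2) ℝ)
    (v : E2n n) (k m : Fin n) :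
    blk k v ⬝ᵥ ((rotMat (-θ) * M * rotMat θ) *ᵥ blk m v)
      = blk k (rotVec θ v) ⬝ᵥ (M *ᵥ blk m (rotVec θ v)) := by
  rw [rotMat_neg]
  have h1 : ((rotMat θ)ᵀ * M * rotMat θ) *ᵥ blk m v
      = (rotMat θ)ᵀ *ᵥ (M *ᵥ (rotMat θ *ᵥ blk m v)) := by
    rw [Matrix.mulVec_mulVec, Matrix.mulVec_mulVec]
  rw [h1, Matrix.dotProduct_mulVec, Matrix.vecMul_transpose, rotMat_mulVec_blk,
    rotMat_mulVec_blk]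

/-- continuity of coordinates of `θ ↦ rotVec θ v` -/
lemma continuous_rotVec_coord {n : ℕ} (v : E2n n) (p : Fin n × Fin 2) :
    Continuous fun θ : Torus n => rotVec θ v p := by
  obtain ⟨i, a⟩ := p
  have hc : Continuous fun θ : Torus n => tcos (θ i) :=
    continuous_tcos.comp (continuous_apply i)
  have hs : Continuous fun θ : Torus n => tsin (θ i) :=
    continuous_tsin.comp (continuous_apply i)
  rcases fin2_cases a with h | h <;> subst h
  · simp only [rotVec_apply0]; fun_prop
  · simp only [rotVec_apply1]; fun_prop

lemma continuous_rotVec {n : ℕ} (v : E2n n) :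
    Continuous fun θ : Torus n => rotVec θ v := by
  have : Continuous fun θ : Torus n => (fun p => rotVec θ v p : (Fin n × Fin 2) → ℝ) :=
    continuous_pi fun p => continuous_rotVec_coord v p
  exact ((EuclideanSpace.equiv (Fin n × Fin 2) ℝ).symm.continuous.comp this : _)

lemma continuous_rotMat_entry {n : ℕ} (p q : Fin n × Fin 2) :
    Continuous fun θ : Torus n => rotMat θ p q := by
  obtain ⟨i, a⟩ := p
  obtain ⟨j, b⟩ := q
  have hc : Continuous fun θ : Torus n => tcos (θ i) :=
    continuous_tcos.comp (continuous_apply i)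
  have hs : Continuous fun θ : Torus n => tsin (θ i) :=
    continuous_tsin.comp (continuous_apply i)
  by_cases h : i = j
  · subst h
    rcases fin2_cases a with h1 | h1 <;> rcases fin2_cases b with h2 | h2 <;>
      subst h1 <;> subst h2 <;> simp [rotMat] <;>
      first | exact hc | exact hs | exact hs.neg
  · simp [rotMat, h]
    exact continuous_const

end Aux

section Main

variable {n n₁ : ℕ} (B : E2n n → Matrix (Fin n × Fin 2) (Fin n₁ × Fin 2) ℝ)

lemma continuous_X_entry (hBc : ∀ p q, Continuous fun v => B v p q) (v : E2n n)
    (p q : Fin n × Fin 2) :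
    Continuous fun θ : Torus n =>
      (rotMat (-θ) * (B (rotVec θ v) * (B (rotVec θ v))ᵀ) * rotMat θ) p q := by
  have hB : ∀ p' q', Continuous fun θ : Torus n => B (rotVec θ v) p' q' :=
    fun p' q' => (hBc p' q').comp (continuous_rotVec v)
  have hR : ∀ p' q', Continuous fun θ : Torus n => rotMat (-θ) p' q' := by
    intro p' q'
    exact (continuous_rotMat_entry p' q').comp continuous_neg
  simp only [Matrix.mul_apply, Matrix.transpose_apply]
  refine continuous_finset_sum _ fun r _ => ?_
  refine Continuous.mul (continuous_finset_sum _ fun s _ => ?_) (continuous_rotMat_entry _ _)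
  exact ((hR p s).mul (continuous_finset_sum _ fun t _ => (hB s t).mul (hB r t)))

/-- Part 1 core: the contraction of `Xmat` against blocks equals the integral. -/
lemma X_contraction (hBc : ∀ p q, Continuous fun v => B v p q) (v : E2n n) (k m : Fin n) :
    blk k v ⬝ᵥ ((Xmat B v) *ᵥ blk m v)
      = ∫ θ : Torus n, blk k (rotVec θ v) ⬝ᵥ
          ((B (rotVec θ v) * (B (rotVec θ v))ᵀ) *ᵥ blk m (rotVec θ v)) ∂(haarT n) := by
  rw [dot_blk]
  have key : ∀ θ : Torus n, blk k (rotVec θ v) ⬝ᵥ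
      ((B (rotVec θ v) * (B (rotVec θ v))ᵀ) *ᵥ blk m (rotVec θ v))
      = ∑ a : Fin 2, ∑ c : Fin 2, v (k,a) *
          (rotMat (-θ) * (B (rotVec θ v) * (B (rotVec θ v))ᵀ) * rotMat θ) (k,a) (m,c) *
          v (m,c) := by
    intro θ
    rw [← conj_pair, dot_blk]
  have hint : ∀ (p q : Fin n × Fin 2), Integrable (fun θ : Torus n =>
      (rotMat (-θ) * (B (rotVec θ v) * (B (rotVec θ v))ᵀ) * rotMat θ) p q) (haarT n) :=
    fun p q => integrable_of_continuous (continuous_X_entry B hBc v p q)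
  calc (∑ a : Fin 2, ∑ c : Fin 2, v (k,a) * Xmat B v (k,a) (m,c) * v (m,c))
      = ∑ a : Fin 2, ∑ c : Fin 2, ∫ θ : Torus n, v (k,a) *
          (rotMat (-θ) * (B (rotVec θ v) * (B (rotVec θ v))ᵀ) * rotMat θ) (k,a) (m,c) *
          v (m,c) ∂(haarT n) := by
        refine Finset.sum_congr rfl fun a _ => Finset.sum_congr rfl fun c _ => ?_
        have hXe : Xmat B v (k,a) (m,c) = ∫ θ : Torus n,
            (rotMat (-θ) * (B (rotVec θ v) * (B (rotVec θ v))ᵀ) * rotMat θ) (k,a) (m,c)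
            ∂(haarT n) := rfl
        rw [hXe, ← integral_const_mul, ← integral_mul_const]
    _ = ∫ θ : Torus n, ∑ a : Fin 2, ∑ c : Fin 2, v (k,a) *
          (rotMat (-θ) * (B (rotVec θ v) * (B (rotVec θ v))ᵀ) * rotMat θ) (k,a) (m,c) *
          v (m,c) ∂(haarT n) := by
        rw [integral_finset_sum]
        · refine Finset.sum_congr rfl fun a _ => ?_
          rw [integral_finset_sum]
          intro c _
          exact (((hint (k,a) (m,c)).const_mul _).mul_const _)
        · intro a _
          refine integrable_finset_sum _ fun c _ => ?_
          exact (((hint (k,a) (m,c)).const_mul _).mul_const _)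
    _ = _ := by
        refine integral_congr_ae (Filter.Eventually.of_forall fun θ => ?_)
        exact (key θ).symm

/-- Part 1 of the theorem, as a standalone statement. -/
lemma part1 (hBc : ∀ p q, Continuous fun v => B v p q)
    (sq : E2n n → Matrix (Fin n × Fin 2) (Fin n × Fin 2) ℝ)
    (hsq : ∀ w, (sq w).PosSemidef ∧ sq w * sq w = Xmat B w)
    (k m : Fin n) (v : E2n n) :
    quadBlock (sq v) v k m
      = ∫ θ : Torus n,
          (∑ j : Fin n₁, ∑ a : Fin 2, ∑ b : Fin 2, ∑ c : Fin 2,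
            (rotVec θ v) (k, a) * B (rotVec θ v) (k, a) (j, b)
              * B (rotVec θ v) (m, c) (j, b) * (rotVec θ v) (m, c)) ∂(haarT n) := by
  have hsym : (sq v)ᵀ = sq v := by
    have h2 : (sq v)ᴴ = sq v := (hsq v).1.1
    rwa [Matrix.conjTranspose_eq_transpose_of_trivial] at h2
  have lhs_eq : quadBlock (sq v) v k m
      = blk k v ⬝ᵥ ((sq v * (sq v)ᵀ) *ᵥ blk m v) := pair_eq _ _ _ _
  rw [lhs_eq, hsym, (hsq v).2, X_contraction B hBc v k m]
  refine integral_congr_ae (Filter.Eventually.of_forall fun θ => ?_)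
  exact (pair_eq _ _ _ _).symm

end Main

/-- existence of a rotation angle carrying one vector of `ℝ²` to another of the same norm. -/
lemma exists_cos_sin (c s : ℝ) (h : c^2 + s^2 = 1) :
    ∃ θ : ℝ, Real.cos θ = c ∧ Real.sin θ = s := by
  have hc1 : -1 ≤ c := by nlinarith
  have hc2 : c ≤ 1 := by nlinarith
  have hsq : Real.sin (Real.arccos c) = Real.sqrt (1 - c^2) := Real.sin_arccos c
  have h1c : (1 : ℝ) - c^2 = s^2 := by linarith
  by_cases hs : 0 ≤ s
  · refine ⟨Real.arccos c, Real.cos_arccos hc1 hc2, ?_⟩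
    rw [hsq, h1c, Real.sqrt_sq hs]
  · refine ⟨-Real.arccos c, by rw [Real.cos_neg]; exact Real.cos_arccos hc1 hc2, ?_⟩
    rw [Real.sin_neg, hsq, h1c, Real.sqrt_sq_eq_abs, abs_of_neg (not_le.mp hs), neg_neg]

lemma exists_rot (v0 v1 w0 w1 : ℝ) (h : v0^2 + v1^2 = w0^2 + w1^2) :
    ∃ θ : ℝ, Real.cos θ * v0 - Real.sin θ * v1 = w0 ∧
      Real.sin θ * v0 + Real.cos θ * v1 = w1 := by
  by_cases hr : v0^2 + v1^2 = 0
  · have hv0 : v0 = 0 := by nlinarith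
    have hv1 : v1 = 0 := by nlinarith
    have hw0 : w0 = 0 := by nlinarith
    have hw1 : w1 = 0 := by nlinarith
    exact ⟨0, by simp [hv0, hv1, hw0, hw1]⟩
  · have hrpos : 0 < v0^2 + v1^2 := lt_of_le_of_ne (by positivity) (Ne.symm hr)
    set r2 := v0^2 + v1^2 with hr2
    obtain ⟨θ, hcos, hsin⟩ := exists_cos_sin ((v0*w0 + v1*w1)/r2) ((v0*w1 - v1*w0)/r2)
      (by field_simp; nlinarith [h])
    refine ⟨θ, ?_, ?_⟩
    · rw [hcos, hsin]; field_simp; rw [hr2]; ring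
    · rw [hcos, hsin]; field_simp; rw [hr2]; ring

/-- For continuous uniformly elliptic `B` with averaged diffusion matrix `X` and principal
square root `⟨⟨B⟩⟩ = sq`, the quantity `Σ_j v_kᵀ ⟨⟨B⟩⟩_{kj} (⟨⟨B⟩⟩_{mj})ᵀ v_m` equals
`∫_{𝕋ⁿ} Σ_j (Φᵏ_θ v_k)ᵀ B_{kj}(Φ_θ v)(B_{mj}(Φ_θ v))ᵀ (Φᵐ_θ v_m) dθ`; moreover it is
invariant under the torus action and hence depends only on the action vector `I(v)`. -/
theorem dispersion_pairing_depends_only_on_actions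
    (n n₁ : ℕ) (lam : ℝ) (hlam : 0 < lam)
    (B : E2n n → Matrix (Fin n × Fin 2) (Fin n₁ × Fin 2) ℝ)
    (hBc : ∀ p q, Continuous fun v => B v p q)
    (hell : ∀ (v : E2n n) (ξ : Fin n × Fin 2 → ℝ),
      lam * (ξ ⬝ᵥ ξ) ≤ ξ ⬝ᵥ (B v * (B v)ᵀ).mulVec ξ ∧
      ξ ⬝ᵥ (B v * (B v)ᵀ).mulVec ξ ≤ lam⁻¹ * (ξ ⬝ᵥ ξ))
    (sq : E2n n → Matrix (Fin n × Fin 2) (Fin n × Fin 2) ℝ)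
    (hsq : ∀ w, (sq w).PosSemidef ∧ sq w * sq w = Xmat B w)
    (k m : Fin n) (v : E2n n) :
    (quadBlock (sq v) v k m
      = ∫ θ : Torus n,
          (∑ j : Fin n₁, ∑ a : Fin 2, ∑ b : Fin 2, ∑ c : Fin 2,
            (rotVec θ v) (k, a) * B (rotVec θ v) (k, a) (j, b)
              * B (rotVec θ v) (m, c) (j, b) * (rotVec θ v) (m, c)) ∂(haarT n)) ∧
    (∀ σ : Torus n, quadBlock (sq (rotVec σ v)) (rotVec σ v) k m = quadBlock (sq v) v k m) ∧
    (∀ w : E2n n,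
      (∀ j : Fin n, (v (j, 0)) ^ 2 + (v (j, 1)) ^ 2 = (w (j, 0)) ^ 2 + (w (j, 1)) ^ 2) →
      quadBlock (sq w) w k m = quadBlock (sq v) v k m) := by
  have heq : ∀ u : E2n n, quadBlock (sq u) u k m
      = ∫ θ : Torus n,
          (∑ j : Fin n₁, ∑ a : Fin 2, ∑ b : Fin 2, ∑ c : Fin 2,
            (rotVec θ u) (k, a) * B (rotVec θ u) (k, a) (j, b)
              * B (rotVec θ u) (m, c) (j, b) * (rotVec θ u) (m, c)) ∂(haarT n) :=
    fun u => part1 B hBc sq hsq k m u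
  have hinv : ∀ σ : Torus n, quadBlock (sq (rotVec σ v)) (rotVec σ v) k m
      = quadBlock (sq v) v k m := by
    intro σ
    rw [heq (rotVec σ v), heq v]
    have : ∀ θ : Torus n, rotVec θ (rotVec σ v) = rotVec (θ + σ) v :=
      fun θ => rotVec_rotVec θ σ v
    simp_rw [this]
    exact integral_add_right_eq_self (μ := haarT n)
      (fun θ : Torus n =>
        (∑ j : Fin n₁, ∑ a : Fin 2, ∑ b : Fin 2, ∑ c : Fin 2,
          (rotVec θ v) (k, a) * B (rotVec θ v) (k, a) (j, b)
            * B (rotVec θ v) (m, c) (j, b) * (rotVec θ v) (m, c))) σ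
  refine ⟨heq v, hinv, ?_⟩
  intro w hw
  obtain ⟨θf, hθf⟩ : ∃ θf : Fin n → ℝ, ∀ j : Fin n,
      Real.cos (θf j) * v (j,0) - Real.sin (θf j) * v (j,1) = w (j,0) ∧
      Real.sin (θf j) * v (j,0) + Real.cos (θf j) * v (j,1) = w (j,1) := by
    choose θf hθf using fun j => exists_rot (v (j,0)) (v (j,1)) (w (j,0)) (w (j,1)) (hw j)
    exact ⟨θf, hθf⟩
  set σ : Torus n := fun j => ((θf j : ℝ) : AddCircle (2*π)) with hσ
  have hrw : rotVec σ v = w := by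
    ext p
    obtain ⟨j, a⟩ := p
    have hc : tcos (σ j) = Real.cos (θf j) := rfl
    have hs : tsin (σ j) = Real.sin (θf j) := rfl
    rcases fin2_cases a with h | h <;> subst h
    · rw [rotVec_apply0, hc, hs]; exact (hθf j).1
    · rw [rotVec_apply1, hc, hs]; exact (hθf j).2
  rw [← hrw]
  exact hinv σ
end
end

section
/- Let n ≥ 1 and R > 0. Define Γ : ℝ^n → ℝ by Γ(x) = exp(−1/(‖x‖ − R)) for ‖x‖ > R and Γ(x) = 0 for ‖x‖ ≤ R (Euclidean norm); Γ is smooth, and let ∇Γ denote its gradient. Let W̃ : ℝ^n → ℝ^n be Lebesgue-measurable and for α ∈ ℝ set W_α = α∇Γ + W̃. Then: (a) the set of α ∈ ℝ for which there exists m ∈ ℤ^n \ {0} such that the Lebesgue measure of {x ∈ ℝ^n : ‖x‖ > R and m·W_α(x) = 0} is positive is at most countable; (b) consequently, if in addition the Lebesgue measure of ⋃_{m ∈ ℤ^n\{0}} {x : ‖x‖ ≤ R, m·W̃(x) = 0} equals zero, then for all but at most countably many α ∈ ℝ the map W_α satisfies the Anosov condition, i.e. the Lebesgue measure of ⋃_{m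 ∈ ℤ^n\{0}} {x ∈ ℝ^n : m·W_α(x) = 0} equals zero. -/
open MeasureTheory Real

noncomputable section

/-- The smooth cut-off function `Γ(x) = exp(−1/(‖x‖−R))` for `‖x‖ > R`, `Γ(x) = 0` for
`‖x‖ ≤ R`. -/
noncomputable def Gam (n : ℕ) (R : ℝ) (x : EuclideanSpace ℝ (Fin n)) : ℝ :=
  if ‖x‖ ≤ R then 0 else Real.exp (-(‖x‖ - R)⁻¹)

section Helpers
open InnerProductSpace

lemma gam_grad_pos (n : ℕ) (R : ℝ) (hR : 0 < R) (x : EuclideanSpace ℝ (Fin n))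
    (hx : R < ‖x‖) : ∃ c : ℝ, 0 < c ∧ gradient (Gam n R) x = c • x := by
  set r := ‖x‖ with hr
  have hr0 : 0 < r := hR.trans hx
  have hrR : 0 < r - R := by linarith
  have hsq : Real.sqrt (r ^ 2) = r := Real.sqrt_sq hr0.le
  set ψ : ℝ → ℝ := fun t => Real.exp (-(Real.sqrt t - R)⁻¹) with hψ
  set d : ℝ := Real.exp (-(r - R)⁻¹) * (1 / (2 * r) / (r - R) ^ 2) with hd
  have hd0 : 0 < d := by positivity
  have h1 : HasDerivAt Real.sqrt (1 / (2 * r)) (r ^ 2) := by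
    have := Real.hasDerivAt_sqrt (x := r ^ 2) (by positivity)
    rwa [hsq] at this
  have h2 : HasDerivAt (fun t => Real.sqrt t - R) (1 / (2 * r)) (r ^ 2) := h1.sub_const R
  have h3 : HasDerivAt (fun t => (Real.sqrt t - R)⁻¹) (-(1 / (2 * r)) / (r - R) ^ 2) (r ^ 2) := by
    have := h2.inv (by rw [hsq]; exact hrR.ne')
    rwa [hsq] at this
  have h4 : HasDerivAt (fun t => -(Real.sqrt t - R)⁻¹) (1 / (2 * r) / (r - R) ^ 2) (r ^ 2) := by
    have := h3.neg; rw [neg_div, neg_neg] at this; exact this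
  have h5 : HasDerivAt ψ d (r ^ 2) := by
    have := h4.exp
    rw [hsq] at this
    simpa [hψ, hd] using this
  have hnorm : HasFDerivAt (fun y : EuclideanSpace ℝ (Fin n) => ‖y‖ ^ 2)
      (2 • (innerSL ℝ x)) x := (hasStrictFDerivAt_norm_sq x).hasFDerivAt
  have hcomp : HasFDerivAt (fun y : EuclideanSpace ℝ (Fin n) => ψ (‖y‖ ^ 2))
      (d • (2 • (innerSL ℝ x))) x := by have := h5.comp_hasFDerivAt x hnorm; exact this
  have heq : Gam n R =ᶠ[nhds x] fun y => ψ (‖y‖ ^ 2) := by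
    have hopen : IsOpen {y : EuclideanSpace ℝ (Fin n) | R < ‖y‖} :=
      isOpen_lt continuous_const continuous_norm
    filter_upwards [hopen.mem_nhds hx] with y hy
    have : ¬ ‖y‖ ≤ R := not_le.2 hy
    simp [Gam, this, hψ, Real.sqrt_sq (norm_nonneg y)]
  refine ⟨2 * d, by positivity, ?_⟩
  have hgrad : HasGradientAt (Gam n R) ((2 * d) • x) x := by
    rw [hasGradientAt_iff_hasFDerivAt]
    have : (toDual ℝ (EuclideanSpace ℝ (Fin n))) ((2 * d) • x) = d • (2 • (innerSL ℝ x)) := by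
      ext y
      simp [toDual_apply_apply, real_inner_smul_left]
      ring
    rw [this]
    exact hcomp.congr_of_eventuallyEq heq
  exact hgrad.gradient

lemma gam_grad_zero (n : ℕ) (R : ℝ) (x : EuclideanSpace ℝ (Fin n))
    (hx : ‖x‖ < R) : gradient (Gam n R) x = 0 := by
  have hopen : IsOpen {y : EuclideanSpace ℝ (Fin n) | ‖y‖ < R} :=
    isOpen_lt continuous_norm continuous_const
  have heq : Gam n R =ᶠ[nhds x] fun _ => (0 : ℝ) := by
    filter_upwards [hopen.mem_nhds hx] with y hy
    simp [Gam, le_of_lt hy]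
  calc gradient (Gam n R) x = gradient (fun _ => (0:ℝ)) x := heq.gradient_eq
    _ = 0 := gradient_const x 0

lemma gam_grad_measurable (n : ℕ) (R : ℝ) : Measurable (gradient (Gam n R)) := by
  have : gradient (Gam n R) =
      fun x => (toDual ℝ (EuclideanSpace ℝ (Fin n))).symm (fderiv ℝ (Gam n R) x) := rfl
  rw [this]
  exact (toDual ℝ (EuclideanSpace ℝ (Fin n))).symm.continuous.measurable.comp
    (measurable_fderiv ℝ (Gam n R))

lemma sum_coord_measurable (n : ℕ) {f : EuclideanSpace ℝ (Fin n) → EuclideanSpace ℝ (Fin n)}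
    (hf : Measurable f) (m : Fin n → ℤ) :
    Measurable (fun x => ∑ i, (m i : ℝ) * f x i) := by
  apply Finset.measurable_sum
  intro i _
  exact measurable_const.mul ((measurable_pi_apply i).comp ((WithLp.measurable_ofLp _ _).comp hf))

lemma hyperplane_null (n : ℕ) (m : Fin n → ℤ) (hm : m ≠ 0) :
    volume {x : EuclideanSpace ℝ (Fin n) | ∑ i, (m i : ℝ) * x i = 0} = 0 := by
  set L : EuclideanSpace ℝ (Fin n) →ₗ[ℝ] ℝ :=
    { toFun := fun x => ∑ i, (m i : ℝ) * x i
      map_add' := by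
        intro a b
        simp [PiLp.add_apply, mul_add, Finset.sum_add_distrib]
      map_smul' := by
        intro c a
        simp only [PiLp.smul_apply, smul_eq_mul, Finset.mul_sum, RingHom.id_apply]
        exact Finset.sum_congr rfl fun i _ => by ring } with hL
  obtain ⟨j, hj⟩ := Function.ne_iff.1 hm
  have hLv : L (EuclideanSpace.single j (1 : ℝ)) = (m j : ℝ) := by
    simp [hL, EuclideanSpace.single_apply]
  have hker : LinearMap.ker L ≠ ⊤ := by
    intro h
    have : L (EuclideanSpace.single j (1 : ℝ)) = 0 := by
      have := h ▸ Submodule.mem_top (R := ℝ) (x := EuclideanSpace.single j (1 : ℝ))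
      exact (LinearMap.mem_ker).1 (h.symm ▸ Submodule.mem_top)
    rw [hLv] at this
    exact hj (by exact_mod_cast this)
  have : {x : EuclideanSpace ℝ (Fin n) | ∑ i, (m i : ℝ) * x i = 0}
      = ↑(LinearMap.ker L) := by
    ext x; simp [LinearMap.mem_ker, hL]
  rw [this]
  exact Measure.addHaar_submodule volume (LinearMap.ker L) hker

lemma coord_expand (n : ℕ) (α c : ℝ) (x w : EuclideanSpace ℝ (Fin n)) (i : Fin n) :
    (α • c • x + w) i = α * (c * x i) + w i := rfl

lemma coord_expand' (n : ℕ) (α : ℝ) (v w : EuclideanSpace ℝ (Fin n)) (i : Fin n) :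
    (α • v + w) i = α * v i + w i := rfl


end Helpers

/-- (a) The set of `α ∈ ℝ` for which some nonzero integer vector `m` is orthogonal to
`W_α = α∇Γ + W̃` on a subset of `{‖x‖ > R}` of positive Lebesgue measure is at most
countable. (b) Consequently, if the rational-dependence locus of `W̃` inside `{‖x‖ ≤ R}`
has measure zero, then for all but countably many `α` the extension `W_α` satisfies the
Anosov condition on all of `ℝⁿ`. -/
theorem extension_anosov_for_cocountably_many_alpha
    (n : ℕ) (hn : 1 ≤ n) (R : ℝ) (hR : 0 < R)
    (W : EuclideanSpace ℝ (Fin n) → EuclideanSpace ℝ (Fin n))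
    (hW : Measurable W) :
    ({α : ℝ | ∃ m : Fin n → ℤ, m ≠ 0 ∧
        0 < volume {x : EuclideanSpace ℝ (Fin n) |
          R < ‖x‖ ∧ ∑ i, (m i : ℝ) * (α • gradient (Gam n R) x + W x) i = 0}}).Countable ∧
    ((volume (⋃ m ∈ {m : Fin n → ℤ | m ≠ 0},
        {x : EuclideanSpace ℝ (Fin n) | ‖x‖ ≤ R ∧ ∑ i, (m i : ℝ) * W x i = 0}) = 0) →
      ∃ C : Set ℝ, C.Countable ∧ ∀ α ∉ C,
        volume (⋃ m ∈ {m : Fin n → ℤ | m ≠ 0},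
          {x : EuclideanSpace ℝ (Fin n) |
            ∑ i, (m i : ℝ) * (α • gradient (Gam n R) x + W x) i = 0}) = 0) := by
  set S : (Fin n → ℤ) → ℝ → Set (EuclideanSpace ℝ (Fin n)) := fun m α =>
    {x | R < ‖x‖ ∧ ∑ i, (m i : ℝ) * (α • gradient (Gam n R) x + W x) i = 0} with hS
  set K : (Fin n → ℤ) → Set (EuclideanSpace ℝ (Fin n)) := fun m =>
    {x | ∑ i, (m i : ℝ) * x i = 0} with hKdef
  have hWα : ∀ α : ℝ, Measurable (fun x => α • gradient (Gam n R) x + W x) := fun α =>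
    ((gam_grad_measurable n R).const_smul α).add hW
  have hSmeas : ∀ m α, MeasurableSet (S m α) := by
    intro m α
    have h1 : MeasurableSet {x : EuclideanSpace ℝ (Fin n) | R < ‖x‖} :=
      measurableSet_lt measurable_const continuous_norm.measurable
    have h2 := (sum_coord_measurable n (hWα α) m) (measurableSet_singleton (0 : ℝ))
    exact h1.inter h2
  have hcnt : ∀ m : Fin n → ℤ, m ≠ 0 → ({α : ℝ | 0 < volume (S m α)}).Countable := by
    intro m hm
    set T : ℝ → Set (EuclideanSpace ℝ (Fin n)) := fun α => S m α \ K m with hT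
    have hTm : ∀ α, MeasurableSet (T α) := fun α =>
      (hSmeas m α).diff ((sum_coord_measurable n measurable_id m) (measurableSet_singleton 0))
    have hdisj : Pairwise (Function.onFun Disjoint T) := by
      intro α β hab
      refine Set.disjoint_left.2 fun x hxa hxb => ?_
      obtain ⟨⟨hxR, e1⟩, hxK⟩ := hxa
      obtain ⟨⟨_, e2⟩, _⟩ := hxb
      obtain ⟨c, hc, hgrad⟩ := gam_grad_pos n R hR x hxR
      apply hxK
      simp only [hKdef, Set.mem_setOf_eq]
      rw [hgrad] at e1 e2
      simp only [coord_expand] at e1 e2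
      have key : (α - β) * c * ∑ i, (m i : ℝ) * x i = 0 := by
        have hd : ∑ i, ((m i : ℝ) * (α * (c * x i) + W x i)
            - (m i : ℝ) * (β * (c * x i) + W x i)) = 0 := by
          rw [Finset.sum_sub_distrib, e1, e2, sub_zero]
        calc (α - β) * c * ∑ i, (m i : ℝ) * x i
            = ∑ i, ((m i : ℝ) * (α * (c * x i) + W x i)
              - (m i : ℝ) * (β * (c * x i) + W x i)) := by
              rw [Finset.mul_sum]
              exact Finset.sum_congr rfl fun i _ => by ring
          _ = 0 := hd
      rcases mul_eq_zero.1 key with h | h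
      · rcases mul_eq_zero.1 h with h' | h'
        · exact absurd (sub_eq_zero.1 h') hab
        · exact absurd h' hc.ne'
      · exact h
    have hcount : ({α : ℝ | 0 < volume (T α)}).Countable :=
      MeasureTheory.Measure.countable_meas_pos_of_disjoint_iUnion hTm hdisj
    have hTeq : ∀ α, volume (T α) = volume (S m α) := fun α =>
      measure_diff_null (hyperplane_null n m hm)
    have : {α : ℝ | 0 < volume (S m α)} = {α : ℝ | 0 < volume (T α)} :=
      Set.ext fun α => by simp only [Set.mem_setOf_eq, hTeq α]
    rw [this]
    exact hcount
  -- the bad set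
  have hbad : ({α : ℝ | ∃ m : Fin n → ℤ, m ≠ 0 ∧ 0 < volume (S m α)}).Countable := by
    have hsub : {α : ℝ | ∃ m : Fin n → ℤ, m ≠ 0 ∧ 0 < volume (S m α)}
        ⊆ ⋃ m : Fin n → ℤ, {α : ℝ | m ≠ 0 ∧ 0 < volume (S m α)} := by
      intro α ⟨m, hm, hpos⟩
      exact Set.mem_iUnion.2 ⟨m, hm, hpos⟩
    refine Set.Countable.mono hsub (Set.countable_iUnion fun m => ?_)
    by_cases hm : m = 0
    · simp [hm]
    · exact (hcnt m hm).mono fun α hα => hα.2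
  refine ⟨hbad, fun h0 => ?_⟩
  refine ⟨_, hbad, fun α hα => ?_⟩
  haveI : Nonempty (Fin n) := ⟨⟨0, hn⟩⟩
  haveI : Nontrivial (EuclideanSpace ℝ (Fin n)) := by
    refine ⟨0, EuclideanSpace.single ⟨0, hn⟩ (1 : ℝ), fun h => ?_⟩
    have := congrArg (fun v => v ⟨0, hn⟩) h.symm
    simp [EuclideanSpace.single_apply] at this
  rw [measure_biUnion_null_iff (Set.to_countable _)]
  intro m hm
  have hS0 : volume (S m α) = 0 := by
    by_contra hpos
    exact hα ⟨m, hm, pos_iff_ne_zero.2 hpos⟩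
  have hsphere : volume {x : EuclideanSpace ℝ (Fin n) | ‖x‖ = R} = 0 := by
    have : {x : EuclideanSpace ℝ (Fin n) | ‖x‖ = R} = Metric.sphere 0 R := by
      ext x; simp [mem_sphere_zero_iff_norm]
    rw [this]
    exact Measure.addHaar_sphere volume 0 R
  have hA : volume {x : EuclideanSpace ℝ (Fin n) | ‖x‖ < R ∧ ∑ i, (m i : ℝ) * W x i = 0}
      = 0 := by
    refine measure_mono_null ?_ h0
    intro x ⟨hx1, hx2⟩
    exact Set.mem_biUnion hm ⟨hx1.le, hx2⟩
  refine measure_mono_null (fun x hx => ?_)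
    (by
      rw [measure_union_null_iff, measure_union_null_iff]
      exact ⟨⟨hA, hsphere⟩, hS0⟩ :
      volume ({x : EuclideanSpace ℝ (Fin n) | ‖x‖ < R ∧ ∑ i, (m i : ℝ) * W x i = 0}
        ∪ {x : EuclideanSpace ℝ (Fin n) | ‖x‖ = R} ∪ S m α) = 0)
  have hx' : ∑ i, (m i : ℝ) * (α • gradient (Gam n R) x + W x) i = 0 := hx
  rcases lt_trichotomy ‖x‖ R with h | h | h
  · left; left
    refine ⟨h, ?_⟩
    rw [← hx']
    refine (Finset.sum_congr rfl fun i _ => ?_).symm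
    rw [gam_grad_zero n R x h, coord_expand']
    simp
  · left; right; exact h
  · right; exact ⟨h, hx'⟩
end
end
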